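/- Let M = (S, ρ) be a matroid scheme. Its set of bases B(M) satisfies: (B1) B(M) is nonempty; (B2) if x and y are distinct elements of B(M) and a is an atom of S with a ≤ x and a ≰ y, then there exists an atom b of S with b ≤ y, b ≰ x, and (x∖a)∨b a nonempty subset of B(M). -/

import Mathlib

/-- The set of minimal upper bounds of `x` and `y` (denoted `x ∨ y` in the paper). -/
def mub {S : Type*} [PartialOrder S] (x y : S) : Set S :=
  {u | x ≤ u ∧ y ≤ u ∧ ∀ v, x ≤ v → y ≤ v → v ≤ u → v = u}

/-- The set of maximal lower bounds of `x` and `y` (denoted `x ∧ y` in the paper). -/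
def mlb {S : Type*} [PartialOrder S] (x y : S) : Set S :=
  {l | l ≤ x ∧ l ≤ y ∧ ∀ m, m ≤ x → m ≤ y → l ≤ m → m = l}

/-- The set of minimal upper bounds of a subset `T`. -/
def mubSet {S : Type*} [PartialOrder S] (T : Set S) : Set S :=
  {u | (∀ t ∈ T, t ≤ u) ∧ ∀ v, (∀ t ∈ T, t ≤ v) → v ≤ u → v = u}

/-- The number of atoms below `x`, i.e. `|x|`, the rank of `x` in a simplicial poset. -/
noncomputable def natRank {S : Type*} [PartialOrder S] [OrderBot S] (x : S) : ℕ :=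
  Nat.card {a : S // IsAtom a ∧ a ≤ x}

/-- A finite bounded-below poset is simplicial if every lower interval is isomorphic to
the Boolean lattice of subsets of the set of atoms below. -/
def IsSimplicialPoset (S : Type*) [PartialOrder S] [OrderBot S] [Fintype S] : Prop :=
  ∀ x : S, Nonempty (Set.Iic x ≃o Set {a : S // IsAtom a ∧ a ≤ x})

/-- A matroid scheme: a rank function `ρ` on a finite simplicial poset `S`
satisfying (M1)–(M5). -/
structure IsMatroidScheme {S : Type*} [PartialOrder S] [OrderBot S] [Fintype S]
    (ρ : S → ℕ) : Prop where
  simplicial : IsSimplicialPoset S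
  M1 : ∀ x : S, ρ x ≤ natRank x
  M2 : ∀ ⦃x y : S⦄, x ≤ y → ρ x ≤ ρ y
  M3 : ∀ x y u l : S, u ∈ mub x y → l ∈ mlb x y → ρ u + ρ l ≤ ρ x + ρ y
  M4 : ∀ x y l : S, l ∈ mlb x y → ρ x = ρ l → (mub x y).Nonempty
  M5 : ∀ x y : S, ρ x < ρ y →
    ∃ a : S, IsAtom a ∧ a ≤ y ∧ ¬ a ≤ x ∧ (mub x a).Nonempty

/-- `cl` is the closure operator of a matroid scheme `(S, ρ)`:
`cl x` is the greatest element above `x` of the same rank. -/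
def IsClosureFun {S : Type*} [PartialOrder S] (ρ : S → ℕ) (cl : S → S) : Prop :=
  ∀ x : S, x ≤ cl x ∧ ρ (cl x) = ρ x ∧ ∀ y : S, x ≤ y → ρ y = ρ x → y ≤ cl x

/-- The bases of a matroid scheme: the maximal independent elements. -/
def Bases {S : Type*} [PartialOrder S] [OrderBot S] (ρ : S → ℕ) : Set S :=
  {x | ρ x = natRank x ∧ ∀ w, ρ w = natRank w → x ≤ w → w = x}

/-- The circuits of a matroid scheme: the minimal dependent elements. -/
def Circuits {S : Type*} [PartialOrder S] [OrderBot S] (ρ : S → ℕ) : Set S :=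
  {x | ρ x < natRank x ∧ ∀ y, ρ y < natRank y → y ≤ x → y = x}

/-- `c` is the complement `x ∖ a` of `a` in the Boolean lattice `S_{≤ x}`. -/
def IsComplementIn {S : Type*} [PartialOrder S] [OrderBot S] (c a x : S) : Prop :=
  c ≤ x ∧ a ≤ x ∧ (∀ l : S, l ≤ c → l ≤ a → l = ⊥) ∧
    (∀ u : S, u ≤ x → c ≤ u → a ≤ u → u = x)

/-- The rank of a matroid scheme: the common value of `ρ` on maximal elements
(equal to the maximum value of `ρ`). -/
noncomputable def schemeRank {S : Type*} [Fintype S] (ρ : S → ℕ) : ℕ :=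
  sSup (Set.range ρ)

/-- The Tutte polynomial of a matroid scheme, as a two-variable integer function. -/
noncomputable def tutte {S : Type*} [PartialOrder S] [OrderBot S] [Fintype S]
    (ρ : S → ℕ) (x y : ℤ) : ℤ :=
  ∑ w : S, (x - 1) ^ (schemeRank ρ - ρ w) * (y - 1) ^ (natRank w - ρ w)

/-- An element of a poset is an order-atom if it covers a global minimum. -/
def OrdAtom {P : Type*} [PartialOrder P] (a : P) : Prop :=
  ∃ b : P, (∀ z : P, b ≤ z) ∧ b ⋖ a

/-- A partial order is a geometric lattice: it is bounded below, every pair has a least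
upper bound and greatest lower bound, it is atomistic, and it is (upper) semimodular. -/
def IsGeomLatOrder (P : Type*) [PartialOrder P] : Prop :=
  (∃ b : P, ∀ x : P, b ≤ x) ∧
  (∀ x y : P, ∃ u : P, IsLUB {x, y} u) ∧
  (∀ x y : P, ∃ l : P, IsGLB {x, y} l) ∧
  (∀ x : P, IsLUB {a : P | OrdAtom a ∧ a ≤ x} x) ∧
  (∀ x y m j : P, IsGLB {x, y} m → IsLUB {x, y} j → m ⋖ x → y ⋖ j)

/-- A geometric poset: a finite bounded-below poset with rank function `rk`
satisfying (G1) and (G2). -/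
def IsGeometricPoset (P : Type*) [PartialOrder P] [OrderBot P] [Fintype P]
    (rk : P → ℕ) : Prop :=
  rk ⊥ = 0 ∧
  (∀ ⦃x y : P⦄, x ≤ y → rk x ≤ rk y) ∧
  (∀ x y : P, x ⋖ y → rk y = rk x + 1) ∧
  (∀ m : P, IsMax m → IsGeomLatOrder (Set.Iic m)) ∧
  (∀ (x : P) (A : Set P), (∀ a ∈ A, IsAtom a) →
    ∀ y ∈ mubSet A, rk x < rk y → rk y = Nat.card A →
      ∃ a ∈ A, ¬ a ≤ x ∧ ∃ w : P, x ≤ w ∧ a ≤ w)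

set_option linter.unusedSectionVars false

namespace MSAux

variable {S : Type*} [PartialOrder S] [OrderBot S] [Fintype S]

def atomSet (x : S) : Set S := {t | IsAtom t ∧ t ≤ x}

lemma natRank_eq_ncard (x : S) : natRank x = (atomSet x).ncard := by
  rw [← Nat.card_coe_set_eq]
  rfl

lemma atomSet_mono {x y : S} (h : x ≤ y) : atomSet x ⊆ atomSet y :=
  fun _ ht => ⟨ht.1, ht.2.trans h⟩

lemma natRank_bot : natRank (⊥ : S) = 0 := by
  rw [natRank_eq_ncard]
  have : atomSet (⊥ : S) = ∅ := by
    ext t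
    simp only [atomSet, Set.mem_setOf_eq, Set.mem_empty_iff_false, iff_false, not_and]
    intro ht hle
    exact ht.1 (le_bot_iff.1 hle)
  rw [this, Set.ncard_empty]

lemma natRank_atom {a : S} (ha : IsAtom a) : natRank a = 1 := by
  rw [natRank_eq_ncard]
  have : atomSet a = {a} := by
    ext t
    constructor
    · rintro ⟨ht, hta⟩
      rcases ha.le_iff.1 hta with h | h
      · exact absurd h ht.1
      · exact h
    · rintro rfl
      exact ⟨ha, le_rfl⟩
  rw [this, Set.ncard_singleton]

/-- existence of a minimal upper bound below a given upper bound -/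
lemma exists_mub_le {c b u' : S} (hc : c ≤ u') (hb : b ≤ u') :
    ∃ u ∈ mub c b, u ≤ u' := by
  classical
  let s : Finset S := Finset.univ.filter (fun v => c ≤ v ∧ b ≤ v ∧ v ≤ u')
  have hmem : ∀ v : S, v ∈ s ↔ c ≤ v ∧ b ≤ v ∧ v ≤ u' := by
    intro v; simp [s]
  obtain ⟨u, hu, hmin⟩ := s.exists_minimal ⟨u', (hmem u').2 ⟨hc, hb, le_rfl⟩⟩
  rw [hmem] at hu
  refine ⟨u, ⟨hu.1, hu.2.1, ?_⟩, hu.2.2⟩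
  intro v hcv hbv hvu
  by_contra hne
  exact hne (le_antisymm hvu (hmin ((hmem v).2 ⟨hcv, hbv, hvu.trans hu.2.2⟩) hvu))

/-- existence of a maximal common lower bound above a given common lower bound -/
lemma exists_mlb_ge {x w z : S} (hw : x ≤ w) (hz : x ≤ z) :
    ∃ l ∈ mlb w z, x ≤ l := by
  classical
  let s : Finset S := Finset.univ.filter (fun m => m ≤ w ∧ m ≤ z ∧ x ≤ m)
  have hmem : ∀ v : S, v ∈ s ↔ v ≤ w ∧ v ≤ z ∧ x ≤ v := by
    intro v; simp [s]
  obtain ⟨l, hl, hmax⟩ := s.exists_maximal ⟨x, (hmem x).2 ⟨hw, hz, le_rfl⟩⟩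
  rw [hmem] at hl
  refine ⟨l, ⟨hl.1, hl.2.1, ?_⟩, hl.2.2⟩
  intro m hmw hmz hlm
  by_contra hne
  exact hne (le_antisymm (hmax ((hmem m).2 ⟨hmw, hmz, hl.2.2.trans hlm⟩) hlm) hlm)

section Iso

variable {x : S} (e : Set.Iic x ≃o Set {a : S // IsAtom a ∧ a ≤ x})

lemma iso_apply_top : e ⟨x, Set.mem_Iic.2 le_rfl⟩ = Set.univ := by
  apply Set.eq_univ_of_univ_subset
  have h1 : e.symm Set.univ ≤ ⟨x, Set.mem_Iic.2 le_rfl⟩ :=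
    Subtype.coe_le_coe.1 (e.symm Set.univ).2
  calc Set.univ = e (e.symm Set.univ) := (e.apply_symm_apply _).symm
    _ ⊆ e ⟨x, Set.mem_Iic.2 le_rfl⟩ := e.monotone h1

lemma iso_apply_bot : e ⟨⊥, Set.mem_Iic.2 bot_le⟩ = ∅ := by
  rw [← Set.subset_empty_iff]
  have h1 : (⟨⊥, Set.mem_Iic.2 bot_le⟩ : Set.Iic x) ≤ e.symm ∅ :=
    Subtype.coe_le_coe.1 bot_le
  calc e ⟨⊥, Set.mem_Iic.2 bot_le⟩ ⊆ e (e.symm ∅) := e.monotone h1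
    _ = ∅ := e.apply_symm_apply _

lemma iso_atom_singleton {t : S} (ht : IsAtom t) (htx : t ≤ x) :
    ∃ p, e ⟨t, Set.mem_Iic.2 htx⟩ = {p} := by
  have hne : e ⟨t, Set.mem_Iic.2 htx⟩ ≠ ∅ := by
    intro hEq
    have h2 := e.injective (hEq.trans (iso_apply_bot e).symm)
    exact ht.1 (congrArg Subtype.val h2)
  obtain ⟨p, hp⟩ := Set.nonempty_iff_ne_empty.2 hne
  have hs_le : e.symm {p} ≤ ⟨t, Set.mem_Iic.2 htx⟩ := by
    rw [← e.symm_apply_apply ⟨t, Set.mem_Iic.2 htx⟩]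
    exact e.symm.monotone (Set.singleton_subset_iff.2 hp)
  have hs_ne : ((e.symm {p} : Set.Iic x) : S) ≠ ⊥ := by
    intro hEq
    have h3 : (e.symm {p} : Set.Iic x) = ⟨⊥, Set.mem_Iic.2 bot_le⟩ := Subtype.ext hEq
    have h4 : ({p} : Set {a : S // IsAtom a ∧ a ≤ x}) = ∅ := by
      rw [← e.apply_symm_apply {p}, h3, iso_apply_bot e]
    exact absurd h4 (Set.singleton_ne_empty p)
  have hco : ((e.symm {p} : Set.Iic x) : S) = t := by
    rcases lt_or_eq_of_le (Subtype.coe_le_coe.2 hs_le) with hlt | heq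
    · exact absurd (ht.2 _ hlt) hs_ne
    · exact heq
  have h5 : (e.symm {p} : Set.Iic x) = ⟨t, Set.mem_Iic.2 htx⟩ := Subtype.ext hco
  exact ⟨p, by rw [← h5, e.apply_symm_apply]⟩

lemma iso_symm_singleton_atom (p : {a : S // IsAtom a ∧ a ≤ x}) :
    IsAtom ((e.symm {p} : Set.Iic x) : S) := by
  constructor
  · intro hEq
    have h3 : (e.symm {p} : Set.Iic x) = ⟨⊥, Set.mem_Iic.2 bot_le⟩ := Subtype.ext hEq
    have h4 : ({p} : Set {a : S // IsAtom a ∧ a ≤ x}) = ∅ := by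
      rw [← e.apply_symm_apply {p}, h3, iso_apply_bot e]
    exact absurd h4 (Set.singleton_ne_empty p)
  · intro s hs
    have hsx : s ∈ Set.Iic x := Set.mem_Iic.2 (hs.le.trans (e.symm {p}).2)
    have hlt : (⟨s, hsx⟩ : Set.Iic x) < e.symm {p} := Subtype.coe_lt_coe.1 hs
    have h6 : e ⟨s, hsx⟩ < e (e.symm {p}) := e.lt_iff_lt.2 hlt
    rw [e.apply_symm_apply] at h6
    have h7 : e ⟨s, hsx⟩ = ∅ := Set.ssubset_singleton_iff.1 h6
    have h8 := e.injective (h7.trans (iso_apply_bot e).symm)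
    exact congrArg Subtype.val h8

end Iso

lemma exists_atom_of_lt (hS : IsSimplicialPoset S) {u w : S} (h : u < w) :
    ∃ t : S, IsAtom t ∧ t ≤ w ∧ ¬ t ≤ u := by
  obtain ⟨e⟩ := hS w
  have hu : u ∈ Set.Iic w := Set.mem_Iic.2 h.le
  have hne : e ⟨u, hu⟩ ≠ Set.univ := by
    intro hEq
    have h2 : (⟨u, hu⟩ : Set.Iic w) = ⟨w, Set.mem_Iic.2 le_rfl⟩ :=
      e.injective (hEq.trans (iso_apply_top e).symm)
    exact absurd (congrArg Subtype.val h2) (ne_of_lt h)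
  obtain ⟨p, hp⟩ : ∃ p, p ∉ e ⟨u, hu⟩ := by
    by_contra hall
    push_neg at hall
    exact hne (Set.eq_univ_of_forall hall)
  refine ⟨((e.symm {p} : Set.Iic w) : S), iso_symm_singleton_atom e p, (e.symm {p}).2, ?_⟩
  intro hle
  have h1 : e.symm {p} ≤ ⟨u, hu⟩ := Subtype.coe_le_coe.1 hle
  have h2 := e.monotone h1
  rw [e.apply_symm_apply] at h2
  exact hp (h2 (Set.mem_singleton p))

lemma atom_le_of_mem_mub (hS : IsSimplicialPoset S) {x y u t : S} (hu : u ∈ mub x y)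
    (ht : IsAtom t) (htu : t ≤ u) : t ≤ x ∨ t ≤ y := by
  obtain ⟨e⟩ := hS u
  obtain ⟨hxu, hyu, hmin⟩ := hu
  set j := e.symm (e ⟨x, Set.mem_Iic.2 hxu⟩ ∪ e ⟨y, Set.mem_Iic.2 hyu⟩) with hj_def
  have hxj : (⟨x, Set.mem_Iic.2 hxu⟩ : Set.Iic u) ≤ j := by
    have h0 := e.symm.monotone
      (Set.subset_union_left (s := e ⟨x, Set.mem_Iic.2 hxu⟩) (t := e ⟨y, Set.mem_Iic.2 hyu⟩))
    rwa [e.symm_apply_apply] at h0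
  have hyj : (⟨y, Set.mem_Iic.2 hyu⟩ : Set.Iic u) ≤ j := by
    have h0 := e.symm.monotone
      (Set.subset_union_right (s := e ⟨x, Set.mem_Iic.2 hxu⟩) (t := e ⟨y, Set.mem_Iic.2 hyu⟩))
    rwa [e.symm_apply_apply] at h0
  have hjv : (j : S) = u := hmin (j : S) hxj hyj j.2
  have hje : j = (⟨u, Set.mem_Iic.2 le_rfl⟩ : Set.Iic u) := Subtype.ext hjv
  have hunion : e ⟨x, Set.mem_Iic.2 hxu⟩ ∪ e ⟨y, Set.mem_Iic.2 hyu⟩ = Set.univ := by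
    calc e ⟨x, Set.mem_Iic.2 hxu⟩ ∪ e ⟨y, Set.mem_Iic.2 hyu⟩
        = e j := (e.apply_symm_apply _).symm
      _ = Set.univ := by rw [hje, iso_apply_top e]
  obtain ⟨p, hp⟩ := iso_atom_singleton e ht htu
  have hpmem : p ∈ e ⟨x, Set.mem_Iic.2 hxu⟩ ∪ e ⟨y, Set.mem_Iic.2 hyu⟩ := by
    rw [hunion]; exact Set.mem_univ p
  rcases hpmem with hpx | hpy
  · left
    have : e ⟨t, Set.mem_Iic.2 htu⟩ ≤ e ⟨x, Set.mem_Iic.2 hxu⟩ := by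
      rw [hp]; exact Set.singleton_subset_iff.2 hpx
    exact Subtype.coe_le_coe.2 (e.le_iff_le.1 this)
  · right
    have : e ⟨t, Set.mem_Iic.2 htu⟩ ≤ e ⟨y, Set.mem_Iic.2 hyu⟩ := by
      rw [hp]; exact Set.singleton_subset_iff.2 hpy
    exact Subtype.coe_le_coe.2 (e.le_iff_le.1 this)

lemma exists_complement (hS : IsSimplicialPoset S) {a x : S} (ha : IsAtom a) (hax : a ≤ x) :
    ∃ c : S, IsComplementIn c a x ∧ ∀ b : S, IsAtom b → b ≤ x → b ≠ a → b ≤ c := by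
  obtain ⟨e⟩ := hS x
  obtain ⟨p, hp⟩ := iso_atom_singleton e ha hax
  set cc := e.symm ({p}ᶜ) with hcc_def
  have hecc : e cc = {p}ᶜ := e.apply_symm_apply _
  refine ⟨(cc : S), ⟨cc.2, hax, ?_, ?_⟩, ?_⟩
  · intro l hlc hla
    have hlx : l ∈ Set.Iic x := Set.mem_Iic.2 (hla.trans hax)
    have h1 : (⟨l, hlx⟩ : Set.Iic x) ≤ cc := Subtype.coe_le_coe.1 hlc
    have h2 : (⟨l, hlx⟩ : Set.Iic x) ≤ ⟨a, Set.mem_Iic.2 hax⟩ := Subtype.coe_le_coe.1 hla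
    have h3 : e ⟨l, hlx⟩ ⊆ {p}ᶜ := hecc ▸ e.monotone h1
    have h4 : e ⟨l, hlx⟩ ⊆ {p} := hp ▸ e.monotone h2
    have h5 : e ⟨l, hlx⟩ = ∅ := by
      rw [← Set.subset_empty_iff]
      intro q hq
      exact absurd (h4 hq) (h3 hq)
    have h6 := e.injective (h5.trans (iso_apply_bot e).symm)
    exact congrArg Subtype.val h6
  · intro u hux hcu hau
    have h1 : cc ≤ ⟨u, Set.mem_Iic.2 hux⟩ := Subtype.coe_le_coe.1 hcu
    have h2 : (⟨a, Set.mem_Iic.2 hax⟩ : Set.Iic x) ≤ ⟨u, Set.mem_Iic.2 hux⟩ :=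
      Subtype.coe_le_coe.1 hau
    have h3 : ({p}ᶜ : Set _) ⊆ e ⟨u, Set.mem_Iic.2 hux⟩ := hecc ▸ e.monotone h1
    have h4 : ({p} : Set _) ⊆ e ⟨u, Set.mem_Iic.2 hux⟩ := hp ▸ e.monotone h2
    have h5 : e ⟨u, Set.mem_Iic.2 hux⟩ = Set.univ := by
      apply Set.eq_univ_of_univ_subset
      rw [← Set.compl_union_self ({p} : Set _)]
      exact Set.union_subset h3 h4
    have h6 : (⟨u, Set.mem_Iic.2 hux⟩ : Set.Iic x) = ⟨x, Set.mem_Iic.2 le_rfl⟩ :=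
      e.injective (h5.trans (iso_apply_top e).symm)
    exact congrArg Subtype.val h6
  · intro b hb hbx hba
    obtain ⟨q, hq⟩ := iso_atom_singleton e hb hbx
    have hqp : q ≠ p := by
      intro hEq
      apply hba
      have : e ⟨b, Set.mem_Iic.2 hbx⟩ = e ⟨a, Set.mem_Iic.2 hax⟩ := by
        rw [hq, hp, hEq]
      exact congrArg Subtype.val (e.injective this)
    have h1 : e ⟨b, Set.mem_Iic.2 hbx⟩ ≤ e cc := by
      rw [hq, hecc]
      exact Set.singleton_subset_iff.2 hqp
    exact Subtype.coe_le_coe.2 (e.le_iff_le.1 h1)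

variable {ρ : S → ℕ}

lemma rho_bot (h : IsMatroidScheme ρ) : ρ (⊥ : S) = 0 :=
  Nat.le_zero.1 (natRank_bot (S := S) ▸ h.M1 ⊥)

lemma rho_atom_le (h : IsMatroidScheme ρ) {a : S} (ha : IsAtom a) : ρ a ≤ 1 :=
  natRank_atom ha ▸ h.M1 a

lemma bot_mem_mlb {c b : S} (hb : IsAtom b) (hbc : ¬ b ≤ c) : ⊥ ∈ mlb c b := by
  refine ⟨bot_le, bot_le, ?_⟩
  intro m hmc hmb _
  rcases hb.le_iff.1 hmb with hm | hm
  · exact hm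
  · exact absurd (hm ▸ hmc) hbc

lemma exists_cl (h : IsMatroidScheme ρ) (x : S) :
    ∃ z, x ≤ z ∧ ρ z = ρ x ∧ ∀ w, x ≤ w → ρ w = ρ x → w ≤ z := by
  classical
  let s : Finset S := Finset.univ.filter (fun w => x ≤ w ∧ ρ w = ρ x)
  have hmem : ∀ v : S, v ∈ s ↔ x ≤ v ∧ ρ v = ρ x := by
    intro v; simp [s]
  obtain ⟨z, hz, hmax⟩ := s.exists_maximal ⟨x, (hmem x).2 ⟨le_rfl, rfl⟩⟩
  rw [hmem] at hz
  refine ⟨z, hz.1, hz.2, ?_⟩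
  intro w hxw hw
  obtain ⟨l, hl, hxl⟩ := exists_mlb_ge hxw hz.1
  have hρl : ρ w = ρ l :=
    le_antisymm (hw ▸ h.M2 hxl) (h.M2 hl.1)
  obtain ⟨v, hv⟩ := h.M4 w z l hl hρl
  have h3 := h.M3 w z v l hv hl
  have h4 : ρ v ≤ ρ z := by omega
  have h5 : ρ z ≤ ρ v := h.M2 hv.2.1
  have h6 : v ∈ s := (hmem v).2 ⟨hz.1.trans hv.2.1, by omega⟩
  have h7 : v = z := by
    by_contra hne
    exact hne (le_antisymm (hmax h6 hv.2.1) hv.2.1)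
  exact h7 ▸ hv.1

lemma augment (h : IsMatroidScheme ρ) {x y : S} (hlt : ρ x < ρ y) :
    ∃ b, IsAtom b ∧ b ≤ y ∧ ¬ b ≤ x ∧ (mub x b).Nonempty ∧
      ∀ u ∈ mub x b, ρ u = ρ x + 1 := by
  obtain ⟨z, hxz, hρz, hcl⟩ := exists_cl h x
  obtain ⟨b, hb, hby, hbz, u', hu'⟩ := h.M5 z y (by omega)
  have hbx : ¬ b ≤ x := fun hc => hbz (hc.trans hxz)
  obtain ⟨u0, hu0, _⟩ := exists_mub_le (hxz.trans hu'.1) hu'.2.1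
  refine ⟨b, hb, hby, hbx, ⟨u0, hu0⟩, ?_⟩
  intro u hu
  have h3 := h.M3 x b u ⊥ hu (bot_mem_mlb hb hbx)
  rw [rho_bot h] at h3
  have hb1 := rho_atom_le h hb
  have hge := h.M2 hu.1
  have hne : ρ u ≠ ρ x := by
    intro hEq
    exact hbz (hu.2.1.trans (hcl u hu.1 hEq))
  omega

lemma natRank_mub (hS : IsSimplicialPoset S) {x b u : S} (hb : IsAtom b)
    (hbx : ¬ b ≤ x) (hu : u ∈ mub x b) : natRank u = natRank x + 1 := by
  have hset : atomSet u = insert b (atomSet x) := by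
    ext t
    constructor
    · rintro ⟨ht, htu⟩
      rcases atom_le_of_mem_mub hS hu ht htu with hh | hh
      · exact Set.mem_insert_iff.2 (Or.inr ⟨ht, hh⟩)
      · rcases hb.le_iff.1 hh with h' | h'
        · exact absurd h' ht.1
        · exact Set.mem_insert_iff.2 (Or.inl h')
    · intro ht
      rcases Set.mem_insert_iff.1 ht with rfl | ⟨ht', htx⟩
      · exact ⟨hb, hu.2.1⟩
      · exact ⟨ht', htx.trans hu.1⟩
  rw [natRank_eq_ncard, natRank_eq_ncard, hset,
    Set.ncard_insert_of_notMem (fun hmem => hbx hmem.2)]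

lemma bases_max (h : IsMatroidScheme ρ) {x : S} (hx : x ∈ Bases ρ) (w : S) : ρ w ≤ ρ x := by
  by_contra hlt
  push_neg at hlt
  obtain ⟨b, hb, _, hbx, ⟨u, hu⟩, hr⟩ := augment h hlt
  have h1 : ρ u = ρ x + 1 := hr u hu
  have h2 : natRank u = natRank x + 1 := natRank_mub h.simplicial hb hbx hu
  have hind : ρ u = natRank u := by rw [h1, h2, hx.1]
  have h3 : u = x := hx.2 u hind hu.1
  exact hbx (h3 ▸ hu.2.1)

lemma basis_of_indep_max (h : IsMatroidScheme ρ) {x u : S} (hx : x ∈ Bases ρ)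
    (hind : ρ u = natRank u) (hr : ρ x ≤ ρ u) : u ∈ Bases ρ := by
  refine ⟨hind, fun w hw huw => ?_⟩
  by_contra hne
  have hlt : u < w := lt_of_le_of_ne huw (fun hh => hne hh.symm)
  obtain ⟨t, ht, htw, htu⟩ := exists_atom_of_lt h.simplicial hlt
  have hss : atomSet u ⊂ atomSet w := by
    rw [Set.ssubset_iff_subset_ne]
    refine ⟨atomSet_mono hlt.le, fun hEq => htu ?_⟩
    have : t ∈ atomSet u := hEq ▸ (⟨ht, htw⟩ : t ∈ atomSet w)
    exact this.2
  have h1 : natRank u < natRank w := by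
    rw [natRank_eq_ncard, natRank_eq_ncard]
    exact Set.ncard_lt_ncard hss (Set.toFinite _)
  have h2 : ρ w ≤ ρ x := bases_max h hx w
  omega

end MSAux

open MSAux

/-- Proposition 6.5: the bases of a matroid scheme satisfy (B1) and (B2). -/
theorem statement9 {S : Type*} [PartialOrder S] [OrderBot S] [Fintype S]
    (ρ : S → ℕ) (h : IsMatroidScheme ρ) :
    (Bases ρ).Nonempty ∧
    (∀ x y : S, x ∈ Bases ρ → y ∈ Bases ρ → x ≠ y →
      ∀ a : S, IsAtom a → a ≤ x → ¬ a ≤ y →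
        ∃ b : S, IsAtom b ∧ b ≤ y ∧ ¬ b ≤ x ∧
          ∃ c : S, IsComplementIn c a x ∧ (mub c b).Nonempty ∧ mub c b ⊆ Bases ρ) := by
  constructor
  · classical
    let s : Finset S := Finset.univ.filter (fun w => ρ w = natRank w)
    have hmem : ∀ v : S, v ∈ s ↔ ρ v = natRank v := by
      intro v; simp [s]
    obtain ⟨x, hx, hmax⟩ := s.exists_maximal
      ⟨⊥, (hmem ⊥).2 (by rw [rho_bot h, natRank_bot])⟩
    rw [hmem] at hx
    refine ⟨x, hx, ?_⟩
    intro w hw hxw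
    by_contra hne
    exact hne (le_antisymm (hmax ((hmem w).2 hw) hxw) hxw)
  · intro x y hx hy hxy a ha hax hay
    obtain ⟨c, hcomp, hcE⟩ := exists_complement h.simplicial ha hax
    have hxmub : x ∈ mub c a := by
      refine ⟨hcomp.1, hcomp.2.1, ?_⟩
      intro v hcv hav hvx
      exact hcomp.2.2.2 v hvx hcv hav
    have hbotmlb : ⊥ ∈ mlb c a := by
      refine ⟨bot_le, bot_le, ?_⟩
      intro m hmc hma _
      exact hcomp.2.2.1 m hmc hma
    have h3 := h.M3 c a x ⊥ hxmub hbotmlb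
    rw [rho_bot h] at h3
    have ha1 := rho_atom_le h ha
    have hac : ¬ a ≤ c := by
      intro hh
      exact ha.1 (hcomp.2.2.1 a hh le_rfl)
    have hss : atomSet c ⊂ atomSet x := by
      rw [Set.ssubset_iff_subset_ne]
      refine ⟨atomSet_mono hcomp.1, fun hEq => hac ?_⟩
      have : a ∈ atomSet c := hEq ▸ (⟨ha, hax⟩ : a ∈ atomSet x)
      exact this.2
    have h4 : natRank c < natRank x := by
      rw [natRank_eq_ncard, natRank_eq_ncard]
      exact Set.ncard_lt_ncard hss (Set.toFinite _)
    have h5 : ρ c ≤ natRank c := h.M1 c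
    -- key arithmetic : ρ c + 1 = ρ x
    have hρx : ρ x = natRank x := hx.1
    have hkey : ρ c + 1 = ρ x := by omega
    have hρy : ρ y = ρ x := le_antisymm (bases_max h hx y) (bases_max h hy x)
    have hlt : ρ c < ρ y := by omega
    obtain ⟨b, hb, hby, hbc, hne, hall⟩ := augment h hlt
    have hbX : ¬ b ≤ x := by
      intro hbx
      have hba : b ≠ a := fun hEq => hay (hEq ▸ hby)
      exact hbc (hcE b hb hbx hba)
    refine ⟨b, hb, hby, hbX, c, hcomp, hne, ?_⟩
    intro u hu
    have h6 : ρ u = ρ c + 1 := hall u hu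
    have h7 : natRank u = natRank c + 1 := natRank_mub h.simplicial hb hbc hu
    have h8 : natRank c = ρ c := by omega
    have hind : ρ u = natRank u := by omega
    exact basis_of_indep_max h hx hind (by omega)
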